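/- Let γ : ℝ → ℝ² be a C³ unit-speed curve with unit normal n(s) = J(γ'(s)) where J(a,b) = (−b,a), and signed curvature κ(s) = ⟨γ''(s), n(s)⟩. If κ(s) + ⟨γ(s), n(s)⟩ = 0 for all s ∈ ℝ, then κ(s) = κ(0)·exp((‖γ(s)‖² − ‖γ(0)‖²)/2) for all s ∈ ℝ. In particular κ never changes sign: either κ(s) = 0 for all s, or κ(s) ≠ 0 for all s. -/

import Mathlib

open Real
open scoped InnerProductSpace

/-- Rotation by `π/2` in the Euclidean plane: `J(a, b) = (-b, a)`. -/
noncomputable def Jrot (v : EuclideanSpace ℝ (Fin 2)) : EuclideanSpace ℝ (Fin 2) :=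
  WithLp.toLp 2 ![-(v 1), v 0]

lemma Jrot_apply0 (v : EuclideanSpace ℝ (Fin 2)) : Jrot v 0 = -(v 1) := rfl
lemma Jrot_apply1 (v : EuclideanSpace ℝ (Fin 2)) : Jrot v 1 = v 0 := rfl

lemma euclid_ext {v w : EuclideanSpace ℝ (Fin 2)} (h0 : v 0 = w 0) (h1 : v 1 = w 1) : v = w := by
  ext i
  fin_cases i <;> assumption

lemma Jrot_add (v w : EuclideanSpace ℝ (Fin 2)) : Jrot (v + w) = Jrot v + Jrot w := by
  refine euclid_ext ?_ ?_ <;>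
    simp [Jrot_apply0, Jrot_apply1, PiLp.add_apply] <;> ring

lemma Jrot_smul (c : ℝ) (v : EuclideanSpace ℝ (Fin 2)) : Jrot (c • v) = c • Jrot v := by
  refine euclid_ext ?_ ?_ <;>
    simp [Jrot_apply0, Jrot_apply1, PiLp.smul_apply, smul_eq_mul] <;> ring

/-- `Jrot` as a continuous linear map. -/
noncomputable def Jclm : EuclideanSpace ℝ (Fin 2) →L[ℝ] EuclideanSpace ℝ (Fin 2) :=
  LinearMap.toContinuousLinearMap
    { toFun := Jrot
      map_add' := Jrot_add
      map_smul' := Jrot_smul }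

lemma Jclm_apply (v : EuclideanSpace ℝ (Fin 2)) : Jclm v = Jrot v := rfl

lemma inner_euclid (v w : EuclideanSpace ℝ (Fin 2)) :
    ⟪v, w⟫_ℝ = v 0 * w 0 + v 1 * w 1 := by
  simp [PiLp.inner_apply, Fin.sum_univ_two, mul_comm]

lemma inner_Jrot_self (v : EuclideanSpace ℝ (Fin 2)) : ⟪v, Jrot v⟫_ℝ = 0 := by
  simp [inner_euclid, Jrot_apply0, Jrot_apply1]; ring

lemma Jrot_Jrot (v : EuclideanSpace ℝ (Fin 2)) : Jrot (Jrot v) = -v := by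
  refine euclid_ext ?_ ?_ <;> simp [Jrot_apply0, Jrot_apply1, PiLp.neg_apply]

/-- Orthogonal decomposition in the plane: if `‖t‖ = 1` and `w ⟂ t`,
then `w` is a multiple of `Jrot t`. -/
lemma orth_decomp {t w : EuclideanSpace ℝ (Fin 2)} (ht : ‖t‖ = 1)
    (hw : ⟪w, t⟫_ℝ = 0) : w = ⟪w, Jrot t⟫_ℝ • Jrot t := by
  have hnorm : t 0 * t 0 + t 1 * t 1 = 1 := by
    have := real_inner_self_eq_norm_sq t
    rw [ht] at this
    rw [inner_euclid] at this
    nlinarith [this]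
  rw [inner_euclid] at hw
  refine euclid_ext ?_ ?_
  · simp only [Jrot_apply0, Jrot_apply1, PiLp.smul_apply, smul_eq_mul, inner_euclid]
    linear_combination t 0 * hw - w 0 * hnorm
  · simp only [Jrot_apply0, Jrot_apply1, PiLp.smul_apply, smul_eq_mul, inner_euclid]
    linear_combination t 1 * hw - w 1 * hnorm

/-- For a `C³` unit-speed plane curve satisfying the contracting self-similar
equation `κ + ⟨γ, n⟩ = 0`, the curvature satisfies
`κ(s) = κ(0)·exp((‖γ(s)‖² − ‖γ(0)‖²)/2)`; in particular `κ` never changes sign. -/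
theorem curvature_exponential_formula
    (γ : ℝ → EuclideanSpace ℝ (Fin 2))
    (hγ : ContDiff ℝ 3 γ)
    (hunit : ∀ s : ℝ, ‖deriv γ s‖ = 1)
    (n : ℝ → EuclideanSpace ℝ (Fin 2))
    (hn : ∀ s : ℝ, n s = Jrot (deriv γ s))
    (κ : ℝ → ℝ)
    (hκ : ∀ s : ℝ, κ s = ⟪deriv (deriv γ) s, n s⟫_ℝ)
    (heq : ∀ s : ℝ, κ s + ⟪γ s, n s⟫_ℝ = 0) :
    (∀ s : ℝ, κ s = κ 0 * Real.exp ((‖γ s‖ ^ 2 - ‖γ 0‖ ^ 2) / 2)) ∧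
      ((∀ s : ℝ, κ s = 0) ∨ (∀ s : ℝ, κ s ≠ 0)) := by
  set T : ℝ → EuclideanSpace ℝ (Fin 2) := deriv γ with hT
  set T' : ℝ → EuclideanSpace ℝ (Fin 2) := deriv (deriv γ) with hT'
  have hγd : Differentiable ℝ γ := hγ.differentiable (by norm_num)
  have hTcd : ContDiff ℝ 2 T :=
    (contDiff_succ_iff_deriv.mp (show ContDiff ℝ (2+1) γ by norm_num; exact hγ)).2.2
  have hTd : Differentiable ℝ T := hTcd.differentiable (by norm_num)
  have hγh : ∀ s, HasDerivAt γ (T s) s := fun s => (hγd s).hasDerivAt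
  have hTh : ∀ s, HasDerivAt T (T' s) s := fun s => (hTd s).hasDerivAt
  -- T' is orthogonal to T
  have horth : ∀ s, ⟪T' s, T s⟫_ℝ = 0 := by
    intro s
    have h1 : HasDerivAt (fun u => ⟪T u, T u⟫_ℝ) (⟪T s, T' s⟫_ℝ + ⟪T' s, T s⟫_ℝ) s :=
      (hTh s).inner ℝ (hTh s)
    have h2 : (fun u => ⟪T u, T u⟫_ℝ) = fun _ => (1 : ℝ) := by
      funext u
      rw [real_inner_self_eq_norm_sq, hunit u]; norm_num
    rw [h2] at h1
    have h3 : (⟪T s, T' s⟫_ℝ + ⟪T' s, T s⟫_ℝ) = 0 := ((hasDerivAt_const s (1:ℝ)).unique h1).symm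
    have h4 : ⟪T s, T' s⟫_ℝ = ⟪T' s, T s⟫_ℝ := real_inner_comm _ _
    linarith
  -- T' s = κ s • Jrot (T s)
  have hdecomp : ∀ s, T' s = κ s • Jrot (T s) := by
    intro s
    have := orth_decomp (hunit s) (horth s)
    rwa [← hn s, ← hκ s, hn s] at this
  have hκeq : ∀ u, κ u = -⟪γ u, Jrot (T u)⟫_ℝ := by
    intro u
    have := heq u
    rw [hn u] at this
    linarith
  have hNderiv : ∀ s, HasDerivAt (fun u => Jrot (T u)) (Jrot (T' s)) s := by
    intro s
    have := Jclm.hasFDerivAt.comp_hasDerivAt s (hTh s)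
    exact this
  have hκderiv : ∀ s, HasDerivAt κ (κ s * ⟪γ s, T s⟫_ℝ) s := by
    intro s
    have h1 : HasDerivAt (fun u => -⟪γ u, Jrot (T u)⟫_ℝ)
        (-(⟪γ s, Jrot (T' s)⟫_ℝ + ⟪T s, Jrot (T s)⟫_ℝ)) s :=
      ((hγh s).inner ℝ (hNderiv s)).neg
    have hval : -(⟪γ s, Jrot (T' s)⟫_ℝ + ⟪T s, Jrot (T s)⟫_ℝ) = κ s * ⟪γ s, T s⟫_ℝ := by
      rw [inner_Jrot_self, hdecomp s, Jrot_smul, Jrot_Jrot, smul_neg, inner_neg_right,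
        real_inner_smul_right]
      ring
    rw [hval] at h1
    have hfe : κ =ᶠ[nhds s] fun u => -⟪γ u, Jrot (T u)⟫_ℝ :=
      Filter.Eventually.of_forall hκeq
    exact h1.congr_of_eventuallyEq hfe
  -- the conserved quantity
  have hFderiv : ∀ s, HasDerivAt (fun u => κ u * Real.exp (-⟪γ u, γ u⟫_ℝ / 2)) 0 s := by
    intro s
    have hq : HasDerivAt (fun u => ⟪γ u, γ u⟫_ℝ) (⟪γ s, T s⟫_ℝ + ⟪T s, γ s⟫_ℝ) s :=
      (hγh s).inner ℝ (hγh s)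
    have hexp : HasDerivAt (fun u => Real.exp (-⟪γ u, γ u⟫_ℝ / 2))
        (Real.exp (-⟪γ s, γ s⟫_ℝ / 2) * (-(⟪γ s, T s⟫_ℝ + ⟪T s, γ s⟫_ℝ) / 2)) s :=
      ((hq.neg).div_const 2).exp
    have h := (hκderiv s).mul hexp
    have h4 : ⟪T s, γ s⟫_ℝ = ⟪γ s, T s⟫_ℝ := real_inner_comm _ _
    refine h.congr_deriv ?_
    rw [h4]
    ring
  have hFconst : ∀ s : ℝ, κ s * Real.exp (-⟪γ s, γ s⟫_ℝ / 2)
      = κ 0 * Real.exp (-⟪γ 0, γ 0⟫_ℝ / 2) := by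
    intro s
    exact is_const_of_deriv_eq_zero (fun x => (hFderiv x).differentiableAt)
      (fun x => (hFderiv x).deriv) s 0
  have hformula : ∀ s : ℝ, κ s = κ 0 * Real.exp ((‖γ s‖ ^ 2 - ‖γ 0‖ ^ 2) / 2) := by
    intro s
    have h := hFconst s
    have hone : -⟪γ s, γ s⟫_ℝ / 2 + ⟪γ s, γ s⟫_ℝ / 2 = 0 := by ring
    calc κ s = κ s * Real.exp (-⟪γ s, γ s⟫_ℝ / 2) * Real.exp (⟪γ s, γ s⟫_ℝ / 2) := by
          rw [mul_assoc, ← Real.exp_add, hone, Real.exp_zero, mul_one]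
      _ = κ 0 * Real.exp (-⟪γ 0, γ 0⟫_ℝ / 2) * Real.exp (⟪γ s, γ s⟫_ℝ / 2) := by rw [h]
      _ = κ 0 * Real.exp ((‖γ s‖ ^ 2 - ‖γ 0‖ ^ 2) / 2) := by
          rw [mul_assoc, ← Real.exp_add]
          congr 1
          rw [← real_inner_self_eq_norm_sq, ← real_inner_self_eq_norm_sq]
          ring
  refine ⟨hformula, ?_⟩
  by_cases h0 : κ 0 = 0
  · left
    intro s
    rw [hformula s, h0, zero_mul]
  · right
    intro s
    rw [hformula s]
    exact mul_ne_zero h0 (Real.exp_ne_zero _)
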